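/- Let H be a complex Hilbert space and let W₁, W₂ : H → H be bounded self-adjoint operators with W₁² = I, W₂² = I, and ‖W₁ − W₂‖ ≤ 1. For i = 1, 2 let E_i = {v ∈ H : W_i v = v} be the +1-eigenspace of W_i, a closed subspace, so that ½(I + W_i) is the orthogonal projection onto E_i. Then the map F : E₂ → E₁ given by F(v) = ½(v + W₁ v) is a bijective bounded linear map; in fact, the composition G∘F : E₂ → E₂ of F with G : E₁ → E₂, G(w) = ½(w + W₂ w), satisfies G(F(v)) = v + ¼(I + W₂)(W₁ − W₂)v, which is an invertible perturbation of the identity of norm-distance at most ½ from it, and similarly for F∘G. -/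

import Mathlib

lemma aux_norm_le_one {H : Type*} [NormedAddCommGroup H] [InnerProductSpace ℂ H] [CompleteSpace H]
    (W : H →L[ℂ] H) (hsa : IsSelfAdjoint W) (hinv : W ∘L W = 1) : ‖W‖ ≤ 1 := by
  have h := ContinuousLinearMap.norm_adjoint_comp_self W
  rw [hsa.adjoint_eq, hinv] at h
  have h1 : ‖(1 : H →L[ℂ] H)‖ ≤ 1 := ContinuousLinearMap.norm_id_le
  nlinarith [norm_nonneg W]

lemma aux_id {H : Type*} [NormedAddCommGroup H] [InnerProductSpace ℂ H]
    (W₁ W₂ : H →L[ℂ] H) (v : H) (hv : W₂ v = v) :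
    (2 : ℂ)⁻¹ • (((2 : ℂ)⁻¹ • (v + W₁ v)) + W₂ ((2 : ℂ)⁻¹ • (v + W₁ v)))
      = v + (4 : ℂ)⁻¹ • ((W₁ - W₂) v + W₂ ((W₁ - W₂) v)) := by
  simp only [map_add, map_smul, map_sub, ContinuousLinearMap.sub_apply, hv]
  module

lemma aux_bound {H : Type*} [NormedAddCommGroup H] [InnerProductSpace ℂ H]
    (W₁ W₂ : H →L[ℂ] H) (h2 : ‖W₂‖ ≤ 1) (hnorm : ‖W₁ - W₂‖ ≤ 1) (u : H) :
    ‖(4 : ℂ)⁻¹ • ((W₁ - W₂) u + W₂ ((W₁ - W₂) u))‖ ≤ 2⁻¹ * ‖u‖ := by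
  have hx : ‖(W₁ - W₂) u‖ ≤ ‖u‖ := by
    calc ‖(W₁ - W₂) u‖ ≤ ‖W₁ - W₂‖ * ‖u‖ := (W₁ - W₂).le_opNorm u
    _ ≤ 1 * ‖u‖ := by gcongr
    _ = ‖u‖ := one_mul _
  have hWx : ‖W₂ ((W₁ - W₂) u)‖ ≤ ‖u‖ := by
    calc ‖W₂ ((W₁ - W₂) u)‖ ≤ ‖W₂‖ * ‖(W₁ - W₂) u‖ := W₂.le_opNorm _
    _ ≤ 1 * ‖u‖ := by gcongr
    _ = ‖u‖ := one_mul _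
  rw [norm_smul]
  have h4 : ‖((4:ℂ)⁻¹)‖ = 4⁻¹ := by norm_num
  rw [h4]
  calc (4:ℝ)⁻¹ * ‖(W₁ - W₂) u + W₂ ((W₁ - W₂) u)‖
      ≤ 4⁻¹ * (‖(W₁ - W₂) u‖ + ‖W₂ ((W₁ - W₂) u)‖) := by gcongr; exact norm_add_le _ _
    _ ≤ 4⁻¹ * (‖u‖ + ‖u‖) := by gcongr
    _ = 2⁻¹ * ‖u‖ := by ring

/-- combined: G(F v) - v bound on eigenspace. -/
lemma aux_GF {H : Type*} [NormedAddCommGroup H] [InnerProductSpace ℂ H]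
    (W₁ W₂ : H →L[ℂ] H) (h2 : ‖W₂‖ ≤ 1) (hnorm : ‖W₁ - W₂‖ ≤ 1) (v : H) (hv : W₂ v = v) :
    ‖(2 : ℂ)⁻¹ • (((2 : ℂ)⁻¹ • (v + W₁ v)) + W₂ ((2 : ℂ)⁻¹ • (v + W₁ v))) - v‖ ≤ 2⁻¹ * ‖v‖ := by
  rw [aux_id W₁ W₂ v hv, add_sub_cancel_left]
  exact aux_bound W₁ W₂ h2 hnorm v

theorem eigenspace_bijection_of_close_involutions
    {H : Type*} [NormedAddCommGroup H] [InnerProductSpace ℂ H] [CompleteSpace H]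
    (W₁ W₂ : H →L[ℂ] H)
    (h₁sa : IsSelfAdjoint W₁) (h₂sa : IsSelfAdjoint W₂)
    (h₁inv : W₁ ∘L W₁ = 1) (h₂inv : W₂ ∘L W₂ = 1)
    (hnorm : ‖W₁ - W₂‖ ≤ 1) :
    Set.BijOn (fun v => (2 : ℂ)⁻¹ • (v + W₁ v)) {v : H | W₂ v = v} {v : H | W₁ v = v} ∧
    (∀ v : H, W₂ v = v →
      (2 : ℂ)⁻¹ • (((2 : ℂ)⁻¹ • (v + W₁ v)) + W₂ ((2 : ℂ)⁻¹ • (v + W₁ v)))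
        = v + (4 : ℂ)⁻¹ • ((W₁ - W₂) v + W₂ ((W₁ - W₂) v))) ∧
    (∀ v : H, W₂ v = v →
      ‖(2 : ℂ)⁻¹ • (((2 : ℂ)⁻¹ • (v + W₁ v)) + W₂ ((2 : ℂ)⁻¹ • (v + W₁ v))) - v‖
        ≤ 2⁻¹ * ‖v‖) ∧
    (∀ w : H, W₁ w = w →
      ‖(2 : ℂ)⁻¹ • (((2 : ℂ)⁻¹ • (w + W₂ w)) + W₁ ((2 : ℂ)⁻¹ • (w + W₂ w))) - w‖
        ≤ 2⁻¹ * ‖w‖) := by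
  have h1le : ‖W₁‖ ≤ 1 := aux_norm_le_one W₁ h₁sa h₁inv
  have h2le : ‖W₂‖ ≤ 1 := aux_norm_le_one W₂ h₂sa h₂inv
  have hnorm' : ‖W₂ - W₁‖ ≤ 1 := by rwa [norm_sub_rev]
  -- the projection-like operators
  set P₁ : H →L[ℂ] H := (2 : ℂ)⁻¹ • (1 + W₁) with hP₁
  set P₂ : H →L[ℂ] H := (2 : ℂ)⁻¹ • (1 + W₂) with hP₂
  have hP₁apply : ∀ v, P₁ v = (2 : ℂ)⁻¹ • (v + W₁ v) := fun v => by
    simp [hP₁, ContinuousLinearMap.smul_apply, ContinuousLinearMap.add_apply]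
  have hP₂apply : ∀ v, P₂ v = (2 : ℂ)⁻¹ • (v + W₂ v) := fun v => by
    simp [hP₂, ContinuousLinearMap.smul_apply, ContinuousLinearMap.add_apply]
  have hW₁sq : ∀ v, W₁ (W₁ v) = v := fun v => by
    have := congrArg (fun T : H →L[ℂ] H => T v) h₁inv; simpa using this
  have hW₂sq : ∀ v, W₂ (W₂ v) = v := fun v => by
    have := congrArg (fun T : H →L[ℂ] H => T v) h₂inv; simpa using this
  have hP₁mem : ∀ v, W₁ (P₁ v) = P₁ v := fun v => by
    rw [hP₁apply, map_smul, map_add, hW₁sq]; module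
  have hP₂mem : ∀ v, W₂ (P₂ v) = P₂ v := fun v => by
    rw [hP₂apply, map_smul, map_add, hW₂sq]; module
  -- eigenspaces as closed submodules
  set K₁ : Submodule ℂ H := LinearMap.ker ((W₁ - 1 : H →L[ℂ] H) : H →ₗ[ℂ] H) with hK₁
  set K₂ : Submodule ℂ H := LinearMap.ker ((W₂ - 1 : H →L[ℂ] H) : H →ₗ[ℂ] H) with hK₂
  have hK₁mem : ∀ v : H, v ∈ K₁ ↔ W₁ v = v := fun v => by
    simp [hK₁, LinearMap.mem_ker, sub_eq_zero]
  have hK₂mem : ∀ v : H, v ∈ K₂ ↔ W₂ v = v := fun v => by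
    simp [hK₂, LinearMap.mem_ker, sub_eq_zero]
  haveI : CompleteSpace K₁ := (W₁ - 1).isClosed_ker.completeSpace_coe
  -- restricted maps
  set F' : K₂ →L[ℂ] K₁ :=
    (P₁ ∘L K₂.subtypeL).codRestrict K₁ (fun v => (hK₁mem _).2 (hP₁mem _)) with hF'
  set G' : K₁ →L[ℂ] K₂ :=
    (P₂ ∘L K₁.subtypeL).codRestrict K₂ (fun v => (hK₂mem _).2 (hP₂mem _)) with hG'
  have hF'apply : ∀ v : K₂, (F' v : H) = P₁ (v : H) := fun v => rfl
  have hG'apply : ∀ w : K₁, (G' w : H) = P₂ (w : H) := fun w => rfl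
  -- the FG bound as statement 4
  have hFG : ∀ w : H, W₁ w = w →
      ‖(2 : ℂ)⁻¹ • (((2 : ℂ)⁻¹ • (w + W₂ w)) + W₁ ((2 : ℂ)⁻¹ • (w + W₂ w))) - w‖
        ≤ 2⁻¹ * ‖w‖ := fun w hw => aux_GF W₂ W₁ h1le hnorm' w hw
  have hGF : ∀ v : H, W₂ v = v →
      ‖(2 : ℂ)⁻¹ • (((2 : ℂ)⁻¹ • (v + W₁ v)) + W₂ ((2 : ℂ)⁻¹ • (v + W₁ v))) - v‖
        ≤ 2⁻¹ * ‖v‖ := fun v hv => aux_GF W₁ W₂ h2le hnorm v hv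
  -- S = F' ∘ G' is invertible on K₁
  set S : K₁ →L[ℂ] K₁ := F' ∘L G' with hS
  have hSnear : ‖(1 : K₁ →L[ℂ] K₁) - S‖ < 1 := by
    have : ‖(1 : K₁ →L[ℂ] K₁) - S‖ ≤ 2⁻¹ := by
      apply ContinuousLinearMap.opNorm_le_bound _ (by norm_num)
      intro w
      have hw : W₁ (w : H) = w := (hK₁mem _).1 w.2
      have : ‖((((1 : K₁ →L[ℂ] K₁) - S) w : K₁) : H)‖ ≤ 2⁻¹ * ‖(w : H)‖ := by
        have hco : ((((1 : K₁ →L[ℂ] K₁) - S) w : K₁) : H) = (w : H) - P₁ (P₂ (w : H)) := by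
          simp [hS, ContinuousLinearMap.sub_apply, hF'apply, hG'apply]
        rw [hco, hP₂apply, hP₁apply, norm_sub_rev]
        exact hFG (w : H) hw
      simpa using this
    linarith
  set U : (K₁ →L[ℂ] K₁)ˣ := Units.oneSub ((1 : K₁ →L[ℂ] K₁) - S) hSnear with hU
  have hUval : (U : K₁ →L[ℂ] K₁) = S := by simp [hU, Units.oneSub]
  -- surjectivity of S
  have hSsurj : Function.Surjective S := by
    intro w
    refine ⟨(↑U⁻¹ : K₁ →L[ℂ] K₁) w, ?_⟩
    have : ((U : K₁ →L[ℂ] K₁) * (↑U⁻¹ : K₁ →L[ℂ] K₁)) w = w := by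
      rw [U.mul_inv]; rfl
    rwa [hUval] at this
  -- injectivity on E₂
  have hinj : Set.InjOn (fun v => (2 : ℂ)⁻¹ • (v + W₁ v)) {v : H | W₂ v = v} := by
    intro v hv v' hv' heq
    simp only [Set.mem_setOf_eq] at hv hv'
    have hsub : W₂ (v - v') = v - v' := by rw [map_sub, hv, hv']
    have heq2 : P₂ (P₁ v) = P₂ (P₁ v') := by
      rw [hP₁apply, hP₁apply]; exact congrArg P₂ heq
    have hid : ∀ u : H, W₂ u = u → P₂ (P₁ u) = u + (4 : ℂ)⁻¹ • ((W₁ - W₂) u + W₂ ((W₁ - W₂) u)) := by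
      intro u hu
      rw [hP₁apply, hP₂apply]
      exact aux_id W₁ W₂ u hu
    have key : v - v' = -((4 : ℂ)⁻¹ • ((W₁ - W₂) (v - v') + W₂ ((W₁ - W₂) (v - v')))) := by
      have h1 := hid v hv
      have h2 := hid v' hv'
      rw [heq2, h2] at h1
      simp only [map_sub, ContinuousLinearMap.sub_apply] at h1 ⊢
      linear_combination (norm := module) -h1
    have hb : ‖v - v'‖ ≤ 2⁻¹ * ‖v - v'‖ := by
      conv_lhs => rw [key]
      rw [norm_neg]
      exact aux_bound W₁ W₂ h2le hnorm (v - v')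
    have h0 : ‖v - v'‖ = 0 := by
      have := norm_nonneg (v - v'); linarith
    exact sub_eq_zero.mp (norm_eq_zero.mp h0)
  -- assemble everything
  have hmapsto : Set.MapsTo (fun v => (2 : ℂ)⁻¹ • (v + W₁ v)) {v : H | W₂ v = v}
      {v : H | W₁ v = v} := by
    intro v _
    have := hP₁mem v
    rw [hP₁apply] at this
    exact this
  have hsurj : Set.SurjOn (fun v => (2 : ℂ)⁻¹ • (v + W₁ v)) {v : H | W₂ v = v}
      {v : H | W₁ v = v} := by
    intro w hw
    obtain ⟨u, hSu⟩ := hSsurj ⟨w, (hK₁mem w).2 hw⟩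
    refine ⟨(G' u : H), (hK₂mem _).1 (G' u).2, ?_⟩
    have : ((S u : K₁) : H) = w := by rw [hSu]
    calc (2 : ℂ)⁻¹ • ((G' u : H) + W₁ (G' u : H)) = P₁ (G' u : H) := (hP₁apply _).symm
      _ = ((S u : K₁) : H) := rfl
      _ = w := this
  refine ⟨⟨hmapsto, hinj, hsurj⟩, ?_, hGF, hFG⟩
  intro v hv
  exact aux_id W₁ W₂ v hv
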